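/- (Multi-dimensional renewal lemma) Let G = (V,E,r) be a strongly connected Mauldin–Williams graph with sim-value D (spectral radius of A(D) equals 1, with positive eigenvector p). Suppose functions h_u : ℝ → ℝ (u ∈ V) satisfy h_u(x) = Σ_{v∈V} Σ_{e∈E_{uv}} r_e^D h_v(x − log(1/r_e)) + ψ_u(x) for all x, where each ψ_u satisfies |ψ_u(x)| ≤ M e^{−τ|x|} for some constants M, τ > 0, and each h_u tends to 0 as x → −∞. Then each h_u is bounded on ℝ. -/

import Mathlib

open Finset Filter Topology
open scoped Matrix

set_option linter.unusedSectionVars false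
set_option maxHeartbeats 1000000

attribute [local instance] Matrix.linftyOpNormedRing Matrix.linftyOpNormedAlgebra

namespace RenewalAux

lemma geom_bound (ρ : ℝ) (h0 : 0 ≤ ρ) (h1 : ρ < 1) (n : ℕ) :
    ∑ j ∈ Finset.range n, ρ ^ j ≤ 1 / (1 - ρ) := by
  rw [geom_sum_eq (by intro h; rw [h] at h1; exact lt_irrefl _ h1) n]
  have hd : (0:ℝ) < 1 - ρ := by linarith
  have he : (ρ ^ n - 1) / (ρ - 1) = (1 - ρ ^ n) / (1 - ρ) := by
    rw [← neg_div_neg_eq]; ring_nf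
  rw [he]
  have hnum : 1 - ρ ^ n ≤ 1 := by
    have := pow_nonneg h0 n; linarith
  gcongr


variable {V : Type*} [Fintype V] [DecidableEq V]

lemma entry_mul_nonneg {B C : Matrix V V ℝ} (hB : ∀ u v, 0 ≤ B u v)
    (hC : ∀ u v, 0 ≤ C u v) : ∀ u v, 0 ≤ (B * C) u v := by
  intro u v
  rw [Matrix.mul_apply]
  exact Finset.sum_nonneg fun c _ => mul_nonneg (hB u c) (hC c v)

lemma entry_pow_nonneg {B : Matrix V V ℝ} (hB : ∀ u v, 0 ≤ B u v) :
    ∀ k u v, 0 ≤ (B ^ k) u v := by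
  intro k
  induction k with
  | zero =>
    intro u v
    by_cases h : u = v <;> simp [Matrix.one_apply, h]
  | succ k ih =>
    rw [pow_succ]
    exact entry_mul_nonneg ih hB

lemma entry_mul_mono {B B' C C' : Matrix V V ℝ}
    (hB' : ∀ u v, 0 ≤ B' u v) (hC : ∀ u v, 0 ≤ C u v)
    (h1 : ∀ u v, B u v ≤ C u v) (h2 : ∀ u v, B' u v ≤ C' u v) :
    ∀ u v, (B * B') u v ≤ (C * C') u v := by
  intro u v
  rw [Matrix.mul_apply, Matrix.mul_apply]
  refine Finset.sum_le_sum fun c _ => ?_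
  exact mul_le_mul (h1 u c) (h2 c v) (hB' c v) (hC u c)

lemma entry_diag_pow_ge_one {B : Matrix V V ℝ} (hB : ∀ u v, 0 ≤ B u v)
    (hd : ∀ v, 1 ≤ B v v) : ∀ k v, 1 ≤ (B ^ k) v v := by
  intro k
  induction k with
  | zero => intro v; simp
  | succ k ih =>
    intro v
    rw [pow_succ, Matrix.mul_apply]
    calc (1 : ℝ) = 1 * 1 := (one_mul 1).symm
    _ ≤ (B ^ k) v v * B v v := mul_le_mul (ih v) (hd v) zero_le_one
        (le_trans zero_le_one (ih v))
    _ ≤ ∑ c, (B ^ k) v c * B c v :=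
        Finset.single_le_sum (fun c _ => mul_nonneg (entry_pow_nonneg hB k v c) (hB c v))
          (Finset.mem_univ v)

lemma one_add_entry_nonneg {B : Matrix V V ℝ} (hB : ∀ u v, 0 ≤ B u v) :
    ∀ u v, 0 ≤ (1 + B) u v := by
  intro u v
  by_cases h : u = v
  · subst h
    have := hB u u
    simp only [Matrix.add_apply, Matrix.one_apply_eq]
    linarith
  · simpa [Matrix.add_apply, Matrix.one_apply, h] using hB u v

lemma entry_pow_le_one_add_pow {B : Matrix V V ℝ} (hB : ∀ u v, 0 ≤ B u v) :
    ∀ k u v, (B ^ k) u v ≤ ((1 + B) ^ k) u v := by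
  have h1B : ∀ u v, 0 ≤ (1 + B) u v := one_add_entry_nonneg hB
  intro k
  induction k with
  | zero => intro u v; simp
  | succ k ih =>
    rw [pow_succ, pow_succ]
    refine entry_mul_mono hB (entry_pow_nonneg h1B k) ih ?_
    intro u v
    by_cases h : u = v
    · subst h; simp only [Matrix.add_apply, Matrix.one_apply_eq]; linarith
    · simp [Matrix.add_apply, Matrix.one_apply, h]

lemma entry_one_add_pow_mono {B : Matrix V V ℝ} (hB : ∀ u v, 0 ≤ B u v)
    {k m : ℕ} (hkm : k ≤ m) : ∀ u v, ((1 + B) ^ k) u v ≤ ((1 + B) ^ m) u v := by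
  intro u v
  have h1B := one_add_entry_nonneg hB
  have : (1 + B) ^ m = (1 + B) ^ k * (1 + B) ^ (m - k) := by
    rw [← pow_add]; congr 1; omega
  rw [this, Matrix.mul_apply]
  calc ((1 + B) ^ k) u v = ((1 + B) ^ k) u v * 1 := (mul_one _).symm
  _ ≤ ((1 + B) ^ k) u v * ((1 + B) ^ (m - k)) v v :=
      mul_le_mul_of_nonneg_left
        (entry_diag_pow_ge_one h1B (fun w => by
          have := hB w w
          simp only [Matrix.add_apply, Matrix.one_apply_eq]
          linarith) (m - k) v)
        (entry_pow_nonneg h1B k u v)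
  _ ≤ ∑ c, ((1 + B) ^ k) u c * ((1 + B) ^ (m - k)) c v :=
      Finset.single_le_sum
        (fun c _ => mul_nonneg (entry_pow_nonneg h1B k u c) (entry_pow_nonneg h1B (m - k) c v))
        (Finset.mem_univ v)





variable {V : Type*} [Fintype V] [DecidableEq V]

lemma charpoly_eval (M : Matrix V V ℂ) (t : ℂ) :
    (Matrix.charpoly M).eval t = (t • (1 : Matrix V V ℂ) - M).det := by
  rw [Matrix.charpoly, ← Polynomial.coe_evalRingHom, RingHom.map_det]
  congr 1
  ext i j
  by_cases h : i = j
  · subst h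
    simp [Matrix.charmatrix_apply_eq, Matrix.sub_apply, Matrix.smul_apply, Matrix.one_apply_eq]
  · simp [Matrix.charmatrix_apply_ne _ _ _ h, Matrix.sub_apply, Matrix.smul_apply,
      Matrix.one_apply_ne h]

lemma spectrum_finite (M : Matrix V V ℂ) : (spectrum ℂ M).Finite := by
  have hsub : spectrum ℂ M ⊆ {x | (Matrix.charpoly M).IsRoot x} := by
    intro lam hl
    rw [spectrum.mem_iff] at hl
    have hdet : (lam • (1 : Matrix V V ℂ) - M).det = 0 := by
      by_contra hne
      exact hl (by
        rw [Algebra.algebraMap_eq_smul_one]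
        exact (Matrix.isUnit_iff_isUnit_det _).mpr (isUnit_iff_ne_zero.mpr hne))
    simpa [Polynomial.IsRoot, charpoly_eval] using hdet
  exact Set.Finite.subset (Polynomial.finite_setOf_isRoot (Matrix.charpoly_monic M).ne_zero) hsub





variable {V : Type*} [Fintype V] [DecidableEq V]

lemma exists_pos_fixed_vector [Nonempty V]
    (Ar : Matrix V V ℝ) (hAr : ∀ u v, 0 ≤ Ar u v)
    (hreach : ∀ u v, ∃ k, 0 < (Ar ^ k) u v)
    (hρ : spectralRadius ℂ (Ar.map (Complex.ofRealHom : ℝ →+* ℂ)) = 1) :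
    ∃ p : V → ℝ, (∀ u, 0 < p u) ∧ ∀ u, ∑ v, Ar u v * p v = p u := by
  classical
  set A : Matrix V V ℂ := Ar.map (Complex.ofRealHom : ℝ →+* ℂ) with hAdef
  have hAc : ∀ u v, A u v = ((Ar u v : ℝ) : ℂ) := fun u v => rfl
  -- spectral radius attained
  have hfin : (spectrum ℂ A).Finite := spectrum_finite A
  have hne : (spectrum ℂ A).Nonempty := spectrum.nonempty A
  obtain ⟨lam, hlam_mem, hlam_max⟩ :
      ∃ lam ∈ spectrum ℂ A, ∀ μ ∈ spectrum ℂ A, ‖μ‖ ≤ ‖lam‖ := by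
    obtain ⟨lam, hmem, hmax⟩ := Set.Finite.exists_maximalFor (fun μ => ‖μ‖) _ hfin hne
    exact ⟨lam, hmem, fun μ hμ => by
      rcases le_total ‖μ‖ ‖lam‖ with h | h
      · exact h
      · exact hmax hμ h⟩
  have hlam_norm : ‖lam‖ = 1 := by
    have hub : (‖lam‖₊ : ENNReal) ≤ 1 := by
      rw [← hρ]
      exact le_iSup₂ (f := fun μ (_ : μ ∈ spectrum ℂ A) => (‖μ‖₊ : ENNReal)) lam hlam_mem
    have hlb : (1 : ENNReal) ≤ (‖lam‖₊ : ENNReal) := by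
      rw [← hρ, spectralRadius]
      exact iSup₂_le fun μ hμ => by
        exact_mod_cast hlam_max μ hμ
    have : (‖lam‖₊ : ENNReal) = 1 := le_antisymm hub hlb
    have h2 : ‖lam‖₊ = 1 := by exact_mod_cast this
    have h3 := congrArg (fun x : NNReal => (x : ℝ)) h2
    simpa using h3
  -- eigenvector
  obtain ⟨w, hw0, hww⟩ : ∃ w : V → ℂ, w ≠ 0 ∧ (lam • (1 : Matrix V V ℂ) - A) *ᵥ w = 0 := by
    rw [spectrum.mem_iff] at hlam_mem
    have hdet : (lam • (1 : Matrix V V ℂ) - A).det = 0 := by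
      by_contra hne'
      exact hlam_mem (by
        rw [Algebra.algebraMap_eq_smul_one]
        exact (Matrix.isUnit_iff_isUnit_det _).mpr (isUnit_iff_ne_zero.mpr hne'))
    obtain ⟨w, hw1, hw2⟩ := (Matrix.exists_mulVec_eq_zero_iff).mpr hdet
    exact ⟨w, hw1, hw2⟩
  have heig : A *ᵥ w = lam • w := by
    have := hww
    rw [Matrix.sub_mulVec, sub_eq_zero] at this
    rw [← this, Matrix.smul_mulVec, Matrix.one_mulVec]
  -- the nonnegative vector q
  set q : V → ℝ := fun v => ‖w v‖ with hqdef
  have hq0 : ∀ v, 0 ≤ q v := fun v => norm_nonneg _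
  obtain ⟨v0, hv0⟩ : ∃ v0, 0 < q v0 := by
    by_contra hc
    push_neg at hc
    apply hw0
    funext v
    have := le_antisymm (hc v) (hq0 v)
    simpa [hqdef] using this
  have hsub : ∀ u, q u ≤ (Ar *ᵥ q) u := by
    intro u
    have h1 : (A *ᵥ w) u = lam * w u := by rw [heig]; rfl
    have h2 : q u = ‖(A *ᵥ w) u‖ := by
      rw [h1, norm_mul, hlam_norm, one_mul]
    rw [h2]
    calc ‖(A *ᵥ w) u‖ = ‖∑ v, A u v * w v‖ := rfl
    _ ≤ ∑ v, ‖A u v * w v‖ := norm_sum_le _ _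
    _ = ∑ v, Ar u v * q v := by
        refine Finset.sum_congr rfl fun v _ => ?_
        rw [norm_mul, hAc, Complex.norm_real, Real.norm_eq_abs, abs_of_nonneg (hAr u v)]
    _ = (Ar *ᵥ q) u := rfl
  -- the positive matrix P
  set m : ℕ := Finset.univ.sup (fun uv : V × V => (hreach uv.1 uv.2).choose) with hmdef
  set P : Matrix V V ℝ := (1 + Ar) ^ m with hPdef
  have hPnn : ∀ u v, 0 ≤ P u v := entry_pow_nonneg (one_add_entry_nonneg hAr) m
  have hPpos : ∀ u v, 0 < P u v := by
    intro u v
    obtain hk := (hreach u v).choose_spec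
    set k := (hreach u v).choose with hkdef
    have hkm : k ≤ m := Finset.le_sup (f := fun uv : V × V => (hreach uv.1 uv.2).choose)
      (Finset.mem_univ (u, v))
    calc (0:ℝ) < (Ar ^ k) u v := hk
    _ ≤ ((1 + Ar) ^ k) u v := entry_pow_le_one_add_pow hAr k u v
    _ ≤ ((1 + Ar) ^ m) u v := entry_one_add_pow_mono hAr hkm u v
  have hPmulpos : ∀ x : V → ℝ, (∀ v, 0 ≤ x v) → (∃ v, 0 < x v) → ∀ u, 0 < (P *ᵥ x) u := by
    intro x hx ⟨vx, hvx⟩ u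
    have : (P *ᵥ x) u = ∑ v, P u v * x v := rfl
    rw [this]
    refine Finset.sum_pos' (fun v _ => mul_nonneg (hPnn u v) (hx v)) ?_
    exact ⟨vx, Finset.mem_univ vx, mul_pos (hPpos u vx) hvx⟩
  set p : V → ℝ := P *ᵥ q with hpdef
  have hppos : ∀ u, 0 < p u := hPmulpos q hq0 ⟨v0, hv0⟩
  have hcomm : Ar * P = P * Ar := by
    have : Commute Ar ((1 + Ar) ^ m) :=
      (Commute.add_right (Commute.one_right Ar) (Commute.refl Ar)).pow_right m
    simpa [hPdef] using this.eq
  have hApP : Ar *ᵥ p = P *ᵥ (Ar *ᵥ q) := by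
    rw [hpdef, Matrix.mulVec_mulVec, Matrix.mulVec_mulVec, hcomm]
  -- equality Ar *ᵥ q = q
  have hfix : Ar *ᵥ q = q := by
    by_contra hne'
    -- the defect vector
    set d : V → ℝ := fun u => (Ar *ᵥ q) u - q u with hddef
    have hd0 : ∀ u, 0 ≤ d u := fun u => sub_nonneg.mpr (hsub u)
    obtain ⟨u0, hu0⟩ : ∃ u0, 0 < d u0 := by
      by_contra hc
      push_neg at hc
      apply hne'
      funext u
      have := le_antisymm (hc u) (hd0 u)
      have : (Ar *ᵥ q) u - q u = 0 := this
      linarith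
    have hPd : ∀ u, 0 < (P *ᵥ d) u := hPmulpos d hd0 ⟨u0, hu0⟩
    -- epsilon
    obtain ⟨umin, _, humin⟩ := Finset.exists_min_image Finset.univ
      (fun u => (P *ᵥ d) u / p u) ⟨Classical.arbitrary V, Finset.mem_univ _⟩
    set ε : ℝ := (P *ᵥ d) umin / p umin with hεdef
    have hεpos : 0 < ε := div_pos (hPd umin) (hppos umin)
    have hεle : ∀ u, ε * p u ≤ (P *ᵥ d) u := by
      intro u
      have h1 : ε ≤ (P *ᵥ d) u / p u := humin u (Finset.mem_univ u)
      calc ε * p u ≤ ((P *ᵥ d) u / p u) * p u :=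
        mul_le_mul_of_nonneg_right h1 (le_of_lt (hppos u))
      _ = (P *ᵥ d) u := div_mul_cancel₀ _ (ne_of_gt (hppos u))
    -- subinvariance with margin
    have hstep : ∀ u, (1 + ε) * p u ≤ (Ar *ᵥ p) u := by
      intro u
      have h1 : (Ar *ᵥ p) u = (P *ᵥ (Ar *ᵥ q)) u := by rw [hApP]
      have h2 : Ar *ᵥ q = fun v => q v + d v := by
        funext v; simp [hddef]
      have h3 : (P *ᵥ (Ar *ᵥ q)) u = p u + (P *ᵥ d) u := by
        rw [h2]
        have : P *ᵥ (fun v => q v + d v) = P *ᵥ q + P *ᵥ d := by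
          rw [← Matrix.mulVec_add]; rfl
        rw [this]; rfl
      rw [h1, h3]
      have := hεle u
      linarith
    -- iterate
    have hiter : ∀ k u, (1 + ε) ^ k * p u ≤ ((Ar ^ k) *ᵥ p) u := by
      intro k
      induction k with
      | zero => intro u; simp
      | succ k ih =>
        intro u
        have h1 : (Ar ^ (k+1)) *ᵥ p = Ar *ᵥ ((Ar ^ k) *ᵥ p) := by
          have h := Matrix.mulVec_mulVec p Ar (Ar ^ k)
          rw [← pow_succ'] at h
          exact h.symm
        rw [h1]
        have h2 : (Ar *ᵥ ((Ar ^ k) *ᵥ p)) u = ∑ v, Ar u v * ((Ar ^ k) *ᵥ p) v := rfl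
        rw [h2]
        have h3 : ∑ v, Ar u v * ((1 + ε) ^ k * p v) ≤ ∑ v, Ar u v * ((Ar ^ k) *ᵥ p) v :=
          Finset.sum_le_sum fun v _ =>
            mul_le_mul_of_nonneg_left (ih v) (hAr u v)
        have h4 : ∑ v, Ar u v * ((1 + ε) ^ k * p v) = (1 + ε) ^ k * ∑ v, Ar u v * p v := by
          rw [Finset.mul_sum]
          exact Finset.sum_congr rfl fun v _ => by ring
        have h5 : (1 + ε) ^ k * ((1 + ε) * p u) ≤ (1 + ε) ^ k * ∑ v, Ar u v * p v := by
          have := hstep u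
          have hpow : (0:ℝ) ≤ (1 + ε) ^ k := pow_nonneg (by linarith) k
          exact mul_le_mul_of_nonneg_left (by exact this) hpow
        calc (1 + ε) ^ (k+1) * p u = (1 + ε) ^ k * ((1 + ε) * p u) := by ring
        _ ≤ (1 + ε) ^ k * ∑ v, Ar u v * p v := h5
        _ = ∑ v, Ar u v * ((1 + ε) ^ k * p v) := h4.symm
        _ ≤ ∑ v, Ar u v * ((Ar ^ k) *ᵥ p) v := h3
    -- contradiction with the spectral radius via Gelfand's formula
    set u1 : V := Classical.arbitrary V with hu1def
    set pc : V → ℂ := fun v => ((p v : ℝ) : ℂ) with hpcdef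
    have hpc_entry : ∀ (k : ℕ) (u : V), ((A ^ k) *ᵥ pc) u = (((Ar ^ k) *ᵥ p) u : ℂ) := by
      intro k u
      have hAk : A ^ k = (Ar ^ k).map ((Complex.ofRealHom : ℝ →+* ℂ) : ℝ → ℂ) := by
        have h0 : A = (Complex.ofRealHom : ℝ →+* ℂ).mapMatrix Ar := rfl
        rw [h0, ← map_pow, RingHom.mapMatrix_apply]
      rw [hAk]
      show ∑ v, (((Ar ^ k) u v : ℝ) : ℂ) * ((p v : ℝ) : ℂ) = (((Ar ^ k) *ᵥ p) u : ℂ)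
      have : (((Ar ^ k) *ᵥ p) u : ℝ) = ∑ v, (Ar ^ k) u v * p v := rfl
      rw [this]
      push_cast
      rfl
    have hpcne : pc ≠ 0 := by
      intro hc
      have h1 := congrFun hc u1
      have h2 : ((p u1 : ℝ) : ℂ) = 0 := h1
      have h3 : p u1 = 0 := by exact_mod_cast h2
      exact absurd h3 (ne_of_gt (hppos u1))
    have hnormpc : 0 < ‖pc‖ := norm_pos_iff.mpr hpcne
    have hlow : ∀ k : ℕ, (1 + ε) ^ k * p u1 ≤ ‖A ^ k‖ * ‖pc‖ := by
      intro k
      calc (1 + ε) ^ k * p u1 ≤ ((Ar ^ k) *ᵥ p) u1 := hiter k u1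
      _ ≤ |((Ar ^ k) *ᵥ p) u1| := le_abs_self _
      _ = ‖((A ^ k) *ᵥ pc) u1‖ := by
          rw [hpc_entry k u1, Complex.norm_real, Real.norm_eq_abs]
      _ ≤ ‖(A ^ k) *ᵥ pc‖ := norm_le_pi_norm _ u1
      _ ≤ ‖A ^ k‖ * ‖pc‖ := Matrix.linfty_opNorm_mulVec _ _
    set c : ℝ := p u1 / ‖pc‖ with hcdef
    have hc : 0 < c := div_pos (hppos u1) hnormpc
    have hAk_norm : ∀ k : ℕ, c * (1 + ε) ^ k ≤ ‖A ^ k‖ := by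
      intro k
      rw [hcdef, div_mul_eq_mul_div, div_le_iff₀ hnormpc]
      calc p u1 * (1 + ε) ^ k = (1 + ε) ^ k * p u1 := by ring
      _ ≤ ‖A ^ k‖ * ‖pc‖ := hlow k
    have hhalf : (0:ℝ) < 1 + ε / 2 := by linarith
    have hr1 : 1 < (1 + ε) / (1 + ε / 2) := by
      rw [lt_div_iff₀ hhalf]; linarith
    have hev : ∀ᶠ k : ℕ in atTop, 1 / c ≤ ((1 + ε) / (1 + ε / 2)) ^ k :=
      (tendsto_pow_atTop_atTop_of_one_lt hr1).eventually_ge_atTop (1 / c)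
    have hev2 : ∀ᶠ k : ℕ in atTop, (1 + ε / 2) ^ k ≤ ‖A ^ k‖ := by
      filter_upwards [hev] with k hk
      have hpk : (0:ℝ) ≤ (1 + ε / 2) ^ k := pow_nonneg (by linarith) k
      have h1 : (1 + ε / 2) ^ k * (1 / c) ≤ (1 + ε / 2) ^ k * ((1 + ε) / (1 + ε / 2)) ^ k :=
        mul_le_mul_of_nonneg_left hk hpk
      have h2 : (1 + ε / 2) ^ k * ((1 + ε) / (1 + ε / 2)) ^ k = (1 + ε) ^ k := by
        rw [← mul_pow]
        congr 1
        field_simp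
      rw [h2] at h1
      calc (1 + ε / 2) ^ k = c * ((1 + ε / 2) ^ k * (1 / c)) := by
            field_simp
      _ ≤ c * (1 + ε) ^ k := mul_le_mul_of_nonneg_left h1 hc.le
      _ ≤ ‖A ^ k‖ := hAk_norm k
    have gel := spectrum.pow_nnnorm_pow_one_div_tendsto_nhds_spectralRadius A
    have hge : ENNReal.ofReal (1 + ε / 2) ≤ spectralRadius ℂ A := by
      refine ge_of_tendsto gel ?_
      filter_upwards [hev2, eventually_ge_atTop 1] with k hk hk1
      have hk0 : (k:ℝ) ≠ 0 := Nat.cast_ne_zero.mpr (by omega)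
      have h1 : ENNReal.ofReal ((1 + ε / 2) ^ k) ≤ (‖A ^ k‖₊ : ENNReal) := by
        rw [← ENNReal.ofReal_coe_nnreal, coe_nnnorm]
        exact ENNReal.ofReal_le_ofReal hk
      have h2 := ENNReal.rpow_le_rpow h1 (by positivity : (0:ℝ) ≤ 1 / (k:ℝ))
      calc ENNReal.ofReal (1 + ε / 2)
          = (ENNReal.ofReal (1 + ε / 2)) ^ (((k:ℝ)) * (1 / (k:ℝ))) := by
            rw [mul_one_div, div_self hk0, ENNReal.rpow_one]
      _ = ((ENNReal.ofReal (1 + ε / 2)) ^ ((k:ℝ))) ^ (1 / (k:ℝ)) := by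
            rw [ENNReal.rpow_mul]
      _ = (ENNReal.ofReal ((1 + ε / 2) ^ k)) ^ (1 / (k:ℝ)) := by
            rw [ENNReal.rpow_natCast, ← ENNReal.ofReal_pow (by linarith)]
      _ ≤ (‖A ^ k‖₊ : ENNReal) ^ (1 / (k:ℝ)) := h2
    rw [hρ] at hge
    have hle1 : (1:ℝ) + ε / 2 ≤ 1 := by
      have := ENNReal.ofReal_le_one.mp hge
      linarith
    linarith
  refine ⟨p, hppos, fun u => ?_⟩
  have : Ar *ᵥ p = p := by rw [hApP, hfix]
  calc ∑ v, Ar u v * p v = (Ar *ᵥ p) u := rfl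
  _ = p u := by rw [this]



end RenewalAux

/-- Multi-dimensional renewal lemma: for a strongly connected Mauldin–Williams graph with
sim-value `D` (spectral radius of `A(D)` equals `1`), if functions `h_u` satisfy the
system of renewal equations with forcing terms `ψ_u` decaying like `e^{-τ|x|}` and each
`h_u → 0` as `x → -∞`, then each `h_u` is bounded on `ℝ`. -/
theorem renewal_lemma_bounded
    {V : Type*} [Fintype V] [DecidableEq V] [Nonempty V] {E : Type*} [Fintype E]
    (src tgt : E → V) (r : E → ℝ) (hr : ∀ e, 0 < r e ∧ r e < 1)
    (hout : ∀ u : V, ∃ e, src e = u)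
    (hconn : ∀ u v : V, Relation.ReflTransGen (fun a b => ∃ e, src e = a ∧ tgt e = b) u v)
    (D : ℝ) (hD : 0 ≤ D)
    (A : Matrix V V ℂ)
    (hA : ∀ u v, A u v =
      ∑ e ∈ univ.filter (fun e => src e = u ∧ tgt e = v), ((r e : ℂ) ^ (D : ℂ)))
    (hρ : spectralRadius ℂ A = 1)
    (h ψ : V → ℝ → ℝ) (M τ : ℝ) (hM : 0 < M) (hτ : 0 < τ)
    (hψ : ∀ u x, |ψ u x| ≤ M * Real.exp (-τ * |x|))
    (heq : ∀ u x, h u x =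
      (∑ v, ∑ e ∈ univ.filter (fun e => src e = u ∧ tgt e = v),
        r e ^ D * h v (x - Real.log (1 / r e))) + ψ u x)
    (hlim : ∀ u, Tendsto (h u) atBot (𝓝 0)) :
    ∀ u, ∃ C : ℝ, ∀ x, |h u x| ≤ C := by
  classical
  -- the real matrix
  set Ar : Matrix V V ℝ := Matrix.of (fun u v =>
    ∑ e ∈ univ.filter (fun e => src e = u ∧ tgt e = v), r e ^ D) with hArdef
  have hAr_apply : ∀ u v, Ar u v =
      ∑ e ∈ univ.filter (fun e => src e = u ∧ tgt e = v), r e ^ D := fun u v => rfl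
  have hAr0 : ∀ u v, 0 ≤ Ar u v := fun u v =>
    Finset.sum_nonneg fun e _ => (Real.rpow_pos_of_pos (hr e).1 D).le
  have hAmap : A = Ar.map ((Complex.ofRealHom : ℝ →+* ℂ) : ℝ → ℂ) := by
    ext u v
    rw [hA u v]
    show _ = ((Ar u v : ℝ) : ℂ)
    rw [hAr_apply]
    push_cast
    refine Finset.sum_congr rfl fun e _ => ?_
    exact (Complex.ofReal_cpow (hr e).1.le D).symm
  -- reachability
  have hreach : ∀ u v, ∃ k, 0 < (Ar ^ k) u v := by
    intro u v
    induction hconn u v with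
    | refl => exact ⟨0, by simp [Matrix.one_apply_eq]⟩
    | @tail b c hab hbc ih =>
      obtain ⟨k, hk⟩ := ih
      obtain ⟨e, he1, he2⟩ := hbc
      have hbc' : 0 < Ar b c := by
        rw [hAr_apply]
        refine Finset.sum_pos' (fun e' _ => (Real.rpow_pos_of_pos (hr e').1 D).le) ?_
        exact ⟨e, Finset.mem_filter.mpr ⟨Finset.mem_univ e, he1, he2⟩,
          Real.rpow_pos_of_pos (hr e).1 D⟩
      refine ⟨k + 1, ?_⟩
      rw [pow_succ, Matrix.mul_apply]
      refine Finset.sum_pos' (fun b' _ => mul_nonneg (RenewalAux.entry_pow_nonneg hAr0 k u b')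
        (hAr0 b' c)) ⟨b, Finset.mem_univ b, mul_pos hk hbc'⟩
  -- positive fixed vector
  obtain ⟨p, hppos, hpfix⟩ := RenewalAux.exists_pos_fixed_vector Ar hAr0 hreach
    (by rw [← hAmap]; exact hρ)
  -- eigen equation in summed form
  have hpe : ∀ u, (∑ v, ∑ e ∈ univ.filter (fun e => src e = u ∧ tgt e = v),
      r e ^ D * p v) = p u := by
    intro u
    rw [← hpfix u]
    refine Finset.sum_congr rfl fun v _ => ?_
    rw [hAr_apply, Finset.sum_mul]
  -- minimum of p
  obtain ⟨umin, _, hum⟩ := Finset.exists_min_image Finset.univ p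
    ⟨Classical.arbitrary V, Finset.mem_univ _⟩
  set pmin := p umin with hpmindef
  have hpmin : 0 < pmin := hppos umin
  have hpminle : ∀ u, pmin ≤ p u := fun u => hum u (Finset.mem_univ u)
  -- gamma and delta
  obtain ⟨e0, -⟩ := hout (Classical.arbitrary V)
  obtain ⟨emin, -, hem⟩ := Finset.exists_min_image Finset.univ
    (fun e => Real.log (1 / r e)) ⟨e0, Finset.mem_univ _⟩
  set γ := Real.log (1 / r emin) with hγdef
  have hγpos : 0 < γ := by
    apply Real.log_pos
    rw [lt_div_iff₀ (hr emin).1]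
    linarith [(hr emin).2]
  have hγle : ∀ e, γ ≤ Real.log (1 / r e) := fun e => hem e (Finset.mem_univ e)
  set δ := min γ 1 with hδdef
  have hδpos : 0 < δ := lt_min hγpos one_pos
  have hδγ : δ ≤ γ := min_le_left _ _
  -- threshold X
  obtain ⟨X, hX0, hXprop⟩ : ∃ X : ℝ, X ≤ 0 ∧ ∀ u, ∀ x ≤ X, |h u x| ≤ pmin := by
    have hev : ∀ᶠ x in atBot, ∀ u, |h u x| ≤ pmin := by
      rw [Filter.eventually_all]
      intro u
      have := Metric.tendsto_nhds.mp (hlim u) pmin hpmin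
      filter_upwards [this] with x hx
      rw [Real.dist_eq, sub_zero] at hx
      exact hx.le
    obtain ⟨X0, hX0⟩ := eventually_atBot.mp hev
    exact ⟨min X0 0, min_le_right _ _,
      fun u x hx => hX0 x (hx.trans (min_le_left _ _)) u⟩
  -- constants
  set M' : ℝ := M * Real.exp (τ * δ) / pmin with hM'def
  have hM'pos : 0 < M' := div_pos (mul_pos hM (Real.exp_pos _)) hpmin
  set a : ℕ → ℝ := fun n => Real.exp (-τ * |X + n * δ|) with hadef
  have ha0 : ∀ n, 0 < a n := fun n => Real.exp_pos _
  set C : ℕ → ℝ := fun n => 1 + M' * ∑ k ∈ Finset.range n, a k with hCdef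
  have hCstep : ∀ n, C (n + 1) = C n + M' * a n := by
    intro n
    simp only [hCdef, Finset.sum_range_succ]
    ring
  have hCmono : ∀ n, C n ≤ C (n + 1) := by
    intro n
    rw [hCstep n]
    nlinarith [ha0 n, hM'pos]
  have hC1 : ∀ n, 1 ≤ C n := by
    intro n
    simp only [hCdef]
    have : 0 ≤ ∑ k ∈ Finset.range n, a k :=
      Finset.sum_nonneg fun k _ => (ha0 k).le
    nlinarith [hM'pos]
  -- the key induction
  have key : ∀ n : ℕ, ∀ u, ∀ x, x ≤ X + n * δ → |h u x| ≤ p u * C n := by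
    intro n
    induction n with
    | zero =>
      intro u x hx
      simp only [Nat.cast_zero, zero_mul, add_zero] at hx
      calc |h u x| ≤ pmin := hXprop u x hx
      _ ≤ p u := hpminle u
      _ = p u * 1 := (mul_one _).symm
      _ ≤ p u * C 0 := mul_le_mul_of_nonneg_left (hC1 0) (hppos u).le
    | succ n ih =>
      intro u x hx
      rcases le_or_gt x (X + n * δ) with hc | hc
      · exact (ih u x hc).trans (mul_le_mul_of_nonneg_left (hCmono n) (hppos u).le)
      · have hxle : x ≤ X + n * δ + δ := by
          have hcast : ((n : ℝ) + 1) * δ = n * δ + δ := by ring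
          push_cast at hx
          linarith
        have hre : ∀ v, ∀ e, e ∈ univ.filter (fun e => src e = u ∧ tgt e = v) →
            |h v (x - Real.log (1 / r e))| ≤ p v * C n := by
          intro v e _
          apply ih v
          have h1 : γ ≤ Real.log (1 / r e) := hγle e
          linarith
        have habs : |h u x| ≤ (∑ v, ∑ e ∈ univ.filter (fun e => src e = u ∧ tgt e = v),
            r e ^ D * |h v (x - Real.log (1 / r e))|) + M * Real.exp (-τ * |x|) := by
          rw [heq u x]
          refine (abs_add_le _ _).trans (add_le_add ?_ (hψ u x))
          refine (Finset.abs_sum_le_sum_abs _ _).trans ?_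
          refine Finset.sum_le_sum fun v _ => ?_
          refine (Finset.abs_sum_le_sum_abs _ _).trans ?_
          refine Finset.sum_le_sum fun e _ => ?_
          rw [abs_mul, abs_of_nonneg (Real.rpow_pos_of_pos (hr e).1 D).le]
        have hsumle : (∑ v, ∑ e ∈ univ.filter (fun e => src e = u ∧ tgt e = v),
            r e ^ D * |h v (x - Real.log (1 / r e))|) ≤ p u * C n := by
          calc (∑ v, ∑ e ∈ univ.filter (fun e => src e = u ∧ tgt e = v),
              r e ^ D * |h v (x - Real.log (1 / r e))|)
              ≤ ∑ v, ∑ e ∈ univ.filter (fun e => src e = u ∧ tgt e = v),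
                r e ^ D * (p v * C n) := by
                refine Finset.sum_le_sum fun v _ => Finset.sum_le_sum fun e he => ?_
                exact mul_le_mul_of_nonneg_left (hre v e he)
                  (Real.rpow_pos_of_pos (hr e).1 D).le
          _ = (∑ v, ∑ e ∈ univ.filter (fun e => src e = u ∧ tgt e = v),
                r e ^ D * p v) * C n := by
                rw [Finset.sum_mul]
                refine Finset.sum_congr rfl fun v _ => ?_
                rw [Finset.sum_mul]
                exact Finset.sum_congr rfl fun e _ => by ring
          _ = p u * C n := by rw [hpe u]
        have hψle : M * Real.exp (-τ * |x|) ≤ p u * (M' * a n) := by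
          have h2 : |x - (X + n * δ)| ≤ δ := by
            rw [abs_le]
            constructor <;> linarith
          have h3 : |X + n * δ| - |x| ≤ δ := by
            have h4 := abs_sub_abs_le_abs_sub (X + n * δ) x
            rw [abs_sub_comm] at h4
            linarith
          have h5 : Real.exp (-τ * |x|) ≤ Real.exp (τ * δ) * a n := by
            rw [hadef, ← Real.exp_add]
            apply Real.exp_le_exp.mpr
            nlinarith
          calc M * Real.exp (-τ * |x|) ≤ M * (Real.exp (τ * δ) * a n) :=
            mul_le_mul_of_nonneg_left h5 hM.le
          _ = pmin * (M' * a n) := by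
              rw [hM'def]
              field_simp
          _ ≤ p u * (M' * a n) := mul_le_mul_of_nonneg_right (hpminle u)
              (mul_nonneg hM'pos.le (ha0 n).le)
        calc |h u x| ≤ p u * C n + p u * (M' * a n) :=
          habs.trans (add_le_add hsumle hψle)
        _ = p u * C (n + 1) := by rw [hCstep n]; ring
  -- uniform bound on the partial sums
  set ρ : ℝ := Real.exp (-(τ * δ)) with hρdef
  have hρ0 : 0 < ρ := Real.exp_pos _
  have hρ1 : ρ < 1 := by
    rw [hρdef, Real.exp_lt_one_iff]
    nlinarith
  set k0 : ℕ := Nat.ceil (-X / δ) with hk0def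
  have hXd : 0 ≤ -X / δ := div_nonneg (by linarith) hδpos.le
  have hk0ge : 0 ≤ X + k0 * δ := by
    have := Nat.le_ceil (-X / δ)
    rw [← hk0def] at this
    have := (div_le_iff₀ hδpos).mp this
    linarith
  have hk0lt : X + k0 * δ ≤ δ := by
    have h1 : (k0 : ℝ) < -X / δ + 1 := by
      rw [hk0def]
      exact Nat.ceil_lt_add_one hXd
    have h2 : (k0 : ℝ) * δ < (-X / δ + 1) * δ := by
      exact mul_lt_mul_of_pos_right h1 hδpos
    have h3 : (-X / δ + 1) * δ = -X + δ := by field_simp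
    linarith
  have hpow : ∀ j : ℕ, ρ ^ j = Real.exp (-(τ * δ) * j) := by
    intro j
    rw [hρdef, ← Real.exp_nat_mul]
    ring_nf
  have habound : ∀ k : ℕ,
      a k ≤ Real.exp (τ * δ) * (if k < k0 then ρ ^ (k0 - k) else ρ ^ (k - k0)) := by
    intro k
    by_cases hk : k < k0
    · rw [if_pos hk]
      have h1 : -τ * |X + k * δ| ≤ τ * (X + k * δ) := by
        have := neg_abs_le (X + k * δ)
        nlinarith
      have h2 : τ * (X + k * δ) = τ * (X + k0 * δ) + -(τ * δ) * ((k0 : ℝ) - k) := by ring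
      have h3 : ((k0 - k : ℕ) : ℝ) = (k0 : ℝ) - k := by
        rw [Nat.cast_sub hk.le]
      calc a k ≤ Real.exp (τ * (X + k * δ)) := Real.exp_le_exp.mpr h1
      _ = Real.exp (τ * (X + k0 * δ)) * Real.exp (-(τ * δ) * ((k0 : ℝ) - k)) := by
          rw [← Real.exp_add, h2]
      _ ≤ Real.exp (τ * δ) * ρ ^ (k0 - k) := by
          rw [hpow (k0 - k), h3]
          have := Real.exp_le_exp.mpr (mul_le_mul_of_nonneg_left hk0lt hτ.le)
          exact mul_le_mul this le_rfl (Real.exp_pos _).le (Real.exp_pos _).le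
    · rw [if_neg hk]
      push_neg at hk
      have h1 : -τ * |X + k * δ| ≤ -τ * (X + k * δ) := by
        have := le_abs_self (X + k * δ)
        nlinarith
      have h2 : -τ * (X + k * δ) = -τ * (X + k0 * δ) + -(τ * δ) * ((k : ℝ) - k0) := by ring
      have h3 : ((k - k0 : ℕ) : ℝ) = (k : ℝ) - k0 := by
        rw [Nat.cast_sub hk]
      calc a k ≤ Real.exp (-τ * (X + k * δ)) := Real.exp_le_exp.mpr h1
      _ = Real.exp (-τ * (X + k0 * δ)) * Real.exp (-(τ * δ) * ((k : ℝ) - k0)) := by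
          rw [← Real.exp_add, h2]
      _ ≤ Real.exp (τ * δ) * ρ ^ (k - k0) := by
          rw [hpow (k - k0), h3]
          have h4 : Real.exp (-τ * (X + k0 * δ)) ≤ 1 := by
            rw [Real.exp_le_one_iff]
            nlinarith
          have h5 : (1 : ℝ) ≤ Real.exp (τ * δ) := by
            rw [Real.one_le_exp_iff]
            positivity
          exact mul_le_mul (h4.trans h5) le_rfl (Real.exp_pos _).le (Real.exp_pos _).le
  have hsumbound : ∀ n : ℕ, ∑ k ∈ Finset.range n, a k ≤
      Real.exp (τ * δ) * (2 / (1 - ρ)) := by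
    intro n
    have h1 : ∑ k ∈ Finset.range n, a k ≤
        ∑ k ∈ Finset.range n, Real.exp (τ * δ) *
          (if k < k0 then ρ ^ (k0 - k) else ρ ^ (k - k0)) :=
      Finset.sum_le_sum fun k _ => habound k
    rw [← Finset.mul_sum] at h1
    refine h1.trans ?_
    refine mul_le_mul_of_nonneg_left ?_ (Real.exp_pos _).le
    rw [Finset.sum_ite]
    have hfirst : ∑ k ∈ (Finset.range n).filter (fun k => k < k0), ρ ^ (k0 - k) ≤
        1 / (1 - ρ) := by
      have him : ∑ k ∈ (Finset.range n).filter (fun k => k < k0), ρ ^ (k0 - k) =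
          ∑ j ∈ ((Finset.range n).filter (fun k => k < k0)).image (fun k => k0 - k),
            ρ ^ j := by
        rw [Finset.sum_image]
        intro k hk k' hk' hkk
        have hk1 := (Finset.mem_filter.mp hk).2
        have hk2 := (Finset.mem_filter.mp hk').2
        simp only at hkk
        omega
      rw [him]
      refine le_trans (Finset.sum_le_sum_of_subset_of_nonneg ?_
        (fun j _ _ => pow_nonneg hρ0.le j)) (RenewalAux.geom_bound ρ hρ0.le hρ1 (k0 + 1))
      intro j hj
      simp only [Finset.mem_image, Finset.mem_filter, Finset.mem_range] at hj ⊢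
      omega
    have hsecond : ∑ k ∈ (Finset.range n).filter (fun k => ¬ k < k0), ρ ^ (k - k0) ≤
        1 / (1 - ρ) := by
      have him : ∑ k ∈ (Finset.range n).filter (fun k => ¬ k < k0), ρ ^ (k - k0) =
          ∑ j ∈ ((Finset.range n).filter (fun k => ¬ k < k0)).image (fun k => k - k0),
            ρ ^ j := by
        rw [Finset.sum_image]
        intro k hk k' hk' hkk
        have hk1 := (Finset.mem_filter.mp hk).2
        have hk2 := (Finset.mem_filter.mp hk').2
        simp only at hkk
        omega
      rw [him]
      refine le_trans (Finset.sum_le_sum_of_subset_of_nonneg ?_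
        (fun j _ _ => pow_nonneg hρ0.le j)) (RenewalAux.geom_bound ρ hρ0.le hρ1 n)
      intro j hj
      simp only [Finset.mem_image, Finset.mem_filter, Finset.mem_range] at hj ⊢
      omega
    have : 2 / (1 - ρ) = 1 / (1 - ρ) + 1 / (1 - ρ) := by ring
    rw [this]
    exact add_le_add hfirst hsecond
  set K : ℝ := 1 + M' * (Real.exp (τ * δ) * (2 / (1 - ρ))) with hKdef
  have hCK : ∀ n, C n ≤ K := by
    intro n
    rw [hCdef, hKdef]
    simp only
    have := hsumbound n
    nlinarith [hM'pos]
  -- conclusion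
  intro u
  refine ⟨p u * K, fun x => ?_⟩
  obtain ⟨n, hn⟩ := exists_nat_ge ((x - X) / δ)
  have hxn : x ≤ X + n * δ := by
    have := (div_le_iff₀ hδpos).mp hn
    linarith
  exact (key n u x hxn).trans (mul_le_mul_of_nonneg_left (hCK n) (hppos u).le)
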